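/- For t = q^k, 0 < q < 1, and j ∈ ℤ≥1, the ratio μ^•((k+j)/2)/μ^•(-k/2) equals t^{-(j-1)} ∏_{i=1}^{j-1} (1 - t²q^i)/(1 - q^i), and the ratio μ^•(-(k+j)/2)/μ^•(-k/2) equals t^{-j} ∏_{i=1}^{j} (1 - t²q^i)/(1 - q^i). -/

import Mathlib

open Filter Complex

/-- Macdonald's truncated theta function for A₁, complex version (`0 < q < 1`). -/
noncomputable def muC (q : ℝ) (k x : ℂ) : ℂ :=
  ∏' i : ℕ, ((1 - (q : ℂ) ^ ((i : ℂ) + 2 * x)) * (1 - (q : ℂ) ^ ((i : ℂ) + 1 - 2 * x))) /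
    ((1 - (q : ℂ) ^ ((i : ℂ) + k + 2 * x)) * (1 - (q : ℂ) ^ ((i : ℂ) + k + 1 - 2 * x)))

namespace MuAux

variable {q : ℝ} {k : ℂ}

lemma Qne0 (hq : 0 < q) : (q:ℂ) ≠ 0 := by
  exact_mod_cast hq.ne'

lemma qcpow_ne_zero (hq : 0 < q) (z : ℂ) : (q:ℂ) ^ z ≠ 0 := by
  rw [Complex.cpow_def_of_ne_zero (Qne0 hq)]; exact Complex.exp_ne_zero _

lemma norm_qcpow (hq : 0 < q) (z : ℂ) : ‖(q:ℂ) ^ z‖ = q ^ z.re :=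
  Complex.norm_cpow_eq_rpow_re_of_pos hq z

lemma qcpow_ne_one_of_re (hq : 0 < q) (hq1 : q < 1) {z : ℂ} (hz : z.re ≠ 0) :
    (q:ℂ) ^ z ≠ 1 := by
  intro h
  have h2 : q ^ z.re = 1 := by
    rw [← norm_qcpow hq z, h]; simp
  have h3 := Real.log_rpow hq z.re
  rw [h2, Real.log_one] at h3
  have hlq : Real.log q ≠ 0 := ne_of_lt (Real.log_neg hq hq1)
  rcases mul_eq_zero.mp h3.symm with h' | h'
  · exact hz h'
  · exact hlq h'

lemma qcpow_neg_ne_one (hq : 0 < q) {z : ℂ} (h : (q:ℂ) ^ z ≠ 1) : (q:ℂ) ^ (-z) ≠ 1 := by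
  rw [Complex.cpow_neg, Ne, inv_eq_one]; exact h

lemma multipliable_aux (hq : 0 < q) (hq1 : q < 1) (c d : ℂ)
    (hc : ∀ i : ℕ, (q:ℂ) ^ ((i:ℂ) + c) ≠ 1) (hd : ∀ i : ℕ, (q:ℂ) ^ ((i:ℂ) + d) ≠ 1) :
    Multipliable (fun i : ℕ => (1 - (q:ℂ) ^ ((i:ℂ) + c)) / (1 - (q:ℂ) ^ ((i:ℂ) + d))) := by
  have hQ0 := Qne0 hq
  set g : ℕ → ℂ := fun i => (1 - (q:ℂ) ^ ((i:ℂ) + c)) / (1 - (q:ℂ) ^ ((i:ℂ) + d)) with hg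
  have hdne : ∀ i : ℕ, (1 : ℂ) - (q:ℂ) ^ ((i:ℂ) + d) ≠ 0 := fun i =>
    sub_ne_zero.2 (Ne.symm (hd i))
  have hgne : ∀ i : ℕ, g i ≠ 0 := fun i =>
    div_ne_zero (sub_ne_zero.2 (Ne.symm (hc i))) (hdne i)
  set e : ℕ → ℂ := fun i => ((q:ℂ) ^ ((i:ℂ) + d) - (q:ℂ) ^ ((i:ℂ) + c)) / (1 - (q:ℂ) ^ ((i:ℂ) + d))
    with he
  have hge : ∀ i, g i = 1 + e i := by
    intro i
    show (1 - (q:ℂ) ^ ((i:ℂ) + c)) / (1 - (q:ℂ) ^ ((i:ℂ) + d)) =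
      1 + ((q:ℂ) ^ ((i:ℂ) + d) - (q:ℂ) ^ ((i:ℂ) + c)) / (1 - (q:ℂ) ^ ((i:ℂ) + d))
    rw [div_eq_iff (hdne i), add_mul, div_mul_cancel₀ _ (hdne i)]; ring
  have hnormsplit : ∀ z : ℂ, ∀ i : ℕ, ‖(q:ℂ) ^ ((i:ℂ) + z)‖ = q ^ (i:ℕ) * q ^ z.re := by
    intro z i
    rw [norm_qcpow hq]
    have : ((i:ℂ) + z).re = (i:ℝ) + z.re := by simp
    rw [this, Real.rpow_add hq, Real.rpow_natCast]
  -- eventual bound on ‖e i‖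
  have htend : Tendsto (fun i : ℕ => q ^ i * q ^ d.re) atTop (nhds 0) := by
    simpa using (tendsto_pow_atTop_nhds_zero_of_lt_one hq.le hq1).mul_const (q ^ d.re)
  have hsmall : ∀ᶠ i : ℕ in atTop, q ^ i * q ^ d.re ≤ 1/2 := by
    filter_upwards [htend.eventually_le_const (by norm_num : (0:ℝ) < 1/2)] with i hi using hi
  have hbound : ∀ᶠ i : ℕ in atTop, ‖e i‖ ≤ (2 * (q ^ d.re + q ^ c.re)) * q ^ i := by
    filter_upwards [hsmall] with i hi
    have hnum : ‖(q:ℂ) ^ ((i:ℂ) + d) - (q:ℂ) ^ ((i:ℂ) + c)‖ ≤ q ^ i * (q ^ d.re + q ^ c.re) := by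
      calc ‖(q:ℂ) ^ ((i:ℂ) + d) - (q:ℂ) ^ ((i:ℂ) + c)‖
          ≤ ‖(q:ℂ) ^ ((i:ℂ) + d)‖ + ‖(q:ℂ) ^ ((i:ℂ) + c)‖ := norm_sub_le _ _
        _ = q ^ i * q ^ d.re + q ^ i * q ^ c.re := by
            rw [hnormsplit d i, hnormsplit c i]
        _ = q ^ i * (q ^ d.re + q ^ c.re) := by ring
    have hden : (1:ℝ)/2 ≤ ‖(1:ℂ) - (q:ℂ) ^ ((i:ℂ) + d)‖ := by
      have h1 : ‖(q:ℂ) ^ ((i:ℂ) + d)‖ = q ^ i * q ^ d.re := by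
        rw [hnormsplit d i]
      have := norm_sub_norm_le (1:ℂ) ((q:ℂ) ^ ((i:ℂ) + d))
      rw [norm_one, h1] at this
      linarith
    have hden0 : (0:ℝ) < ‖(1:ℂ) - (q:ℂ) ^ ((i:ℂ) + d)‖ := lt_of_lt_of_le (by norm_num) hden
    rw [he]
    simp only [norm_div]
    rw [div_le_iff₀ hden0]
    calc ‖(q:ℂ) ^ ((i:ℂ) + d) - (q:ℂ) ^ ((i:ℂ) + c)‖
        ≤ q ^ i * (q ^ d.re + q ^ c.re) := hnum
      _ = (2 * (q ^ d.re + q ^ c.re)) * q ^ i * (1/2) := by ring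
      _ ≤ (2 * (q ^ d.re + q ^ c.re)) * q ^ i * ‖(1:ℂ) - (q:ℂ) ^ ((i:ℂ) + d)‖ := by
          apply mul_le_mul_of_nonneg_left hden
          positivity
  have hsumnorm : Summable (fun i : ℕ => ‖e i‖) := by
    apply Summable.of_norm_bounded_eventually (g := fun i : ℕ => (2 * (q ^ d.re + q ^ c.re)) * q ^ i)
      (((summable_geometric_of_lt_one hq.le hq1)).mul_left _)
    rw [Nat.cofinite_eq_atTop]
    filter_upwards [hbound] with i hi
    simpa using hi
  have hetend : Tendsto (fun i : ℕ => ‖e i‖) atTop (nhds 0) := hsumnorm.tendsto_atTop_zero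
  have hlogsum : Summable (fun i : ℕ => Complex.log (g i)) := by
    apply Summable.of_norm_bounded_eventually (g := fun i : ℕ => 3/2 * ‖e i‖) (hsumnorm.mul_left _)
    rw [Nat.cofinite_eq_atTop]
    filter_upwards [hetend.eventually_le_const (by norm_num : (0:ℝ) < 1/2)] with i hi
    rw [hge i]
    simpa using Complex.norm_log_one_add_half_le_self (by simpa using hi)
  exact Complex.multipliable_of_summable_log hlogsum



noncomputable def T (q : ℝ) (a b : ℂ) (i : ℕ) : ℂ :=
  (1 - (q:ℂ) ^ ((i:ℂ) + a)) / (1 - (q:ℂ) ^ ((i:ℂ) + b))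

def GoodP (q : ℝ) (k x : ℂ) : Prop :=
  (∀ n : ℤ, (q:ℂ) ^ (2*x + (n:ℂ)) ≠ 1) ∧ (∀ n : ℤ, (q:ℂ) ^ (k + 2*x + (n:ℂ)) ≠ 1) ∧
  (∀ n : ℤ, (q:ℂ) ^ (k - 2*x + (n:ℂ)) ≠ 1)


lemma ne_one_congr {a b : ℂ} (h : (q:ℂ)^a ≠ 1) (hab : a = b) : (q:ℂ)^b ≠ 1 := hab ▸ h

lemma GoodP.add_half {x : ℂ} (hg : GoodP q k x) (n : ℕ) : GoodP q k (x + (n:ℂ)/2) := by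
  obtain ⟨hA, hB, hC⟩ := hg
  refine ⟨fun m => ?_, fun m => ?_, fun m => ?_⟩
  · rw [show 2*(x + (n:ℂ)/2) + (m:ℂ) = 2*x + (((m + n : ℤ)):ℂ) by push_cast; ring]
    exact hA (m+n)
  · rw [show k + 2*(x + (n:ℂ)/2) + (m:ℂ) = k + 2*x + (((m + n : ℤ)):ℂ) by push_cast; ring]
    exact hB (m+n)
  · rw [show k - 2*(x + (n:ℂ)/2) + (m:ℂ) = k - 2*x + (((m - n : ℤ)):ℂ) by push_cast; ring]
    exact hC (m-n)

lemma muC_shift (hq : 0 < q) (hq1 : q < 1) {x : ℂ} (hg : GoodP q k x) :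
    muC q k (x + 1/2) * ((1 - (q:ℂ)^(2*x)) * (1 - (q:ℂ)^(k - 2*x))) =
    muC q k x * ((1 - (q:ℂ)^(k + 2*x)) * (1 - (q:ℂ)^(-(2*x)))) := by
  obtain ⟨hA, hB, hC⟩ := hg
  have n1 : ∀ i : ℕ, (q:ℂ)^((i:ℂ) + 2*x) ≠ 1 := fun i =>
    ne_one_congr (hA i) (by push_cast; ring)
  have d1 : ∀ i : ℕ, (q:ℂ)^((i:ℂ) + (k + 2*x)) ≠ 1 := fun i =>
    ne_one_congr (hB i) (by push_cast; ring)
  have n2 : ∀ i : ℕ, (q:ℂ)^((i:ℂ) + (1 - 2*x)) ≠ 1 := fun i =>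
    ne_one_congr (qcpow_neg_ne_one hq (hA (-(i+1)))) (by push_cast; ring)
  have d2 : ∀ i : ℕ, (q:ℂ)^((i:ℂ) + (k + 1 - 2*x)) ≠ 1 := fun i =>
    ne_one_congr (hC (i+1)) (by push_cast; ring)
  have n3 : ∀ i : ℕ, (q:ℂ)^((i:ℂ) + -(2*x)) ≠ 1 := fun i =>
    ne_one_congr (qcpow_neg_ne_one hq (hA (-i))) (by push_cast; ring)
  have d3 : ∀ i : ℕ, (q:ℂ)^((i:ℂ) + (k - 2*x)) ≠ 1 := fun i =>
    ne_one_congr (hC i) (by push_cast; ring)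
  have n1' : ∀ i : ℕ, (q:ℂ)^((i:ℂ) + (2*x + 1)) ≠ 1 := fun i =>
    ne_one_congr (n1 (i+1)) (by push_cast; ring)
  have d1' : ∀ i : ℕ, (q:ℂ)^((i:ℂ) + (k + 2*x + 1)) ≠ 1 := fun i =>
    ne_one_congr (d1 (i+1)) (by push_cast; ring)
  have m1 : Multipliable (T q (2*x) (k + 2*x)) := multipliable_aux hq hq1 _ _ n1 d1
  have m2 : Multipliable (T q (1 - 2*x) (k + 1 - 2*x)) := multipliable_aux hq hq1 _ _ n2 d2
  have m3 : Multipliable (T q (-(2*x)) (k - 2*x)) := multipliable_aux hq hq1 _ _ n3 d3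
  have m1' : Multipliable (fun i => T q (2*x) (k + 2*x) (i+1)) := by
    apply (multipliable_aux hq hq1 (2*x+1) (k+2*x+1) n1' d1').congr
    intro i
    unfold T
    rw [show ((i+1:ℕ):ℂ) + 2*x = (i:ℂ) + (2*x+1) by push_cast; ring,
        show ((i+1:ℕ):ℂ) + (k + 2*x) = (i:ℂ) + (k+2*x+1) by push_cast; ring]
  have m2' : Multipliable (fun i => T q (-(2*x)) (k - 2*x) (i+1)) := by
    apply m2.congr
    intro i
    unfold T
    rw [show ((i+1:ℕ):ℂ) + -(2*x) = (i:ℂ) + (1 - 2*x) by push_cast; ring,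
        show ((i+1:ℕ):ℂ) + (k - 2*x) = (i:ℂ) + (k + 1 - 2*x) by push_cast; ring]
  have hmx : muC q k x = (∏' i, T q (2*x) (k+2*x) i) * (∏' i, T q (1-2*x) (k+1-2*x) i) := by
    rw [← m1.tprod_mul m2]
    unfold muC T
    apply tprod_congr
    intro i
    rw [show (i:ℂ) + k + 2*x = (i:ℂ) + (k + 2*x) by ring,
        show (i:ℂ) + 1 - 2*x = (i:ℂ) + (1 - 2*x) by ring,
        show (i:ℂ) + k + 1 - 2*x = (i:ℂ) + (k + 1 - 2*x) by ring,
        div_mul_div_comm]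
  have hmx2 : muC q k (x + 1/2) =
      (∏' i, T q (2*x) (k+2*x) (i+1)) * (∏' i, T q (-(2*x)) (k-2*x) i) := by
    rw [← m1'.tprod_mul m3]
    unfold muC T
    apply tprod_congr
    intro i
    rw [show (i:ℂ) + 2*(x + 1/2) = ((i+1:ℕ):ℂ) + 2*x by push_cast; ring,
        show (i:ℂ) + k + 2*(x + 1/2) = ((i+1:ℕ):ℂ) + (k + 2*x) by push_cast; ring,
        show (i:ℂ) + 1 - 2*(x + 1/2) = (i:ℂ) + -(2*x) by push_cast; ring,
        show (i:ℂ) + k + 1 - 2*(x + 1/2) = (i:ℂ) + (k - 2*x) by push_cast; ring,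
        div_mul_div_comm]
  have E1 : (∏' i, T q (2*x) (k+2*x) i) = T q (2*x) (k+2*x) 0 * ∏' i, T q (2*x) (k+2*x) (i+1) :=
    tprod_eq_zero_mul' m1'
  have E2 : (∏' i, T q (-(2*x)) (k-2*x) i)
      = T q (-(2*x)) (k-2*x) 0 * ∏' i, T q (-(2*x)) (k-2*x) (i+1) :=
    tprod_eq_zero_mul' m2'
  have E2t : (∏' i, T q (-(2*x)) (k-2*x) (i+1)) = ∏' i, T q (1-2*x) (k+1-2*x) i :=
    tprod_congr fun i => by
      unfold T
      rw [show ((i+1:ℕ):ℂ) + -(2*x) = (i:ℂ) + (1 - 2*x) by push_cast; ring,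
          show ((i+1:ℕ):ℂ) + (k - 2*x) = (i:ℂ) + (k + 1 - 2*x) by push_cast; ring]
  have hT10 : T q (2*x) (k+2*x) 0 = (1 - (q:ℂ)^(2*x)) / (1 - (q:ℂ)^(k+2*x)) := by
    unfold T
    rw [show ((0:ℕ):ℂ) + 2*x = 2*x by push_cast; ring,
        show ((0:ℕ):ℂ) + (k + 2*x) = k + 2*x by push_cast; ring]
  have hT30 : T q (-(2*x)) (k-2*x) 0 = (1 - (q:ℂ)^(-(2*x))) / (1 - (q:ℂ)^(k-2*x)) := by
    unfold T
    rw [show ((0:ℕ):ℂ) + -(2*x) = -(2*x) by push_cast; ring,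
        show ((0:ℕ):ℂ) + (k - 2*x) = k - 2*x by push_cast; ring]
  have hd10 : (1:ℂ) - (q:ℂ)^(k+2*x) ≠ 0 :=
    sub_ne_zero.2 (Ne.symm (ne_one_congr (d1 0) (by push_cast; ring)))
  have hd30 : (1:ℂ) - (q:ℂ)^(k-2*x) ≠ 0 :=
    sub_ne_zero.2 (Ne.symm (ne_one_congr (d3 0) (by push_cast; ring)))
  rw [hmx2, hmx, E1, E2, E2t, hT10, hT30]
  field_simp

lemma muC_shift_iter (hq : 0 < q) (hq1 : q < 1) {x : ℂ} (hg : GoodP q k x) : ∀ n : ℕ,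
    muC q k (x + (n:ℂ)/2) *
      ∏ m ∈ Finset.range n, ((1 - (q:ℂ)^(2*x + (m:ℂ))) * (1 - (q:ℂ)^(k - 2*x - (m:ℂ)))) =
    muC q k x *
      ∏ m ∈ Finset.range n, ((1 - (q:ℂ)^(k + 2*x + (m:ℂ))) * (1 - (q:ℂ)^(-(2*x) - (m:ℂ))))
  | 0 => by simp
  | (n+1) => by
    have IH := muC_shift_iter hq hq1 hg n
    have hstep := muC_shift hq hq1 (hg.add_half n)
    rw [show 2*(x + (n:ℂ)/2) = 2*x + (n:ℂ) by ring] at hstep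
    rw [show k - (2*x + (n:ℂ)) = k - 2*x - (n:ℂ) by ring,
        show k + (2*x + (n:ℂ)) = k + 2*x + (n:ℂ) by ring,
        show -(2*x + (n:ℂ)) = -(2*x) - (n:ℂ) by ring,
        show x + (n:ℂ)/2 + 1/2 = x + ((n+1:ℕ):ℂ)/2 by push_cast; ring] at hstep
    rw [Finset.prod_range_succ, Finset.prod_range_succ]
    linear_combination
      (∏ m ∈ Finset.range n, ((1 - (q:ℂ)^(2*x + (m:ℂ))) * (1 - (q:ℂ)^(k - 2*x - (m:ℂ))))) * hstep
      + ((1 - (q:ℂ)^(k + 2*x + (n:ℂ))) * (1 - (q:ℂ)^(-(2*x) - (n:ℂ)))) * IH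

lemma muC_reflect (x : ℂ) : muC q k (1/2 - x) = muC q k x := by
  unfold muC
  apply tprod_congr
  intro i
  rw [show (i:ℂ) + 2*(1/2 - x) = (i:ℂ) + 1 - 2*x by ring,
      show (i:ℂ) + 1 - 2*(1/2 - x) = (i:ℂ) + 2*x by ring,
      show (i:ℂ) + k + 2*(1/2 - x) = (i:ℂ) + k + 1 - 2*x by ring,
      show (i:ℂ) + k + 1 - 2*(1/2 - x) = (i:ℂ) + k + 2*x by ring]
  ring




/-- Points where some factor `q^(c+2x+n)` equals 1 are separated. -/
lemma bad_separated (hq : 0 < q) (hq1 : q < 1) (c : ℂ) {x y : ℂ}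
    (hx : ∃ n : ℤ, (q:ℂ) ^ (c + 2*x + (n:ℂ)) = 1)
    (hy : ∃ n : ℤ, (q:ℂ) ^ (c + 2*y + (n:ℂ)) = 1)
    (hdist : dist x y < min (1/2) (Real.pi / (2 * |Real.log q|))) : x = y := by
  obtain ⟨n, hn⟩ := hx
  obtain ⟨n', hn'⟩ := hy
  have hQ0 := Qne0 hq
  have hlq : Real.log q < 0 := Real.log_neg hq hq1
  have hlq0 : Real.log q ≠ 0 := ne_of_lt hlq
  set L := Real.log q with hL
  have hratio : (q:ℂ) ^ (2*(x - y) + ((n - n' : ℤ):ℂ)) = 1 := by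
    rw [show 2*(x - y) + ((n - n' : ℤ):ℂ) = (c + 2*x + (n:ℂ)) - (c + 2*y + ((n':ℂ))) by
      push_cast; ring, Complex.cpow_sub _ _ hQ0, hn, hn']
    norm_num
  rw [Complex.cpow_def_of_ne_zero hQ0, Complex.exp_eq_one_iff] at hratio
  obtain ⟨l, hl⟩ := hratio
  rw [← Complex.ofReal_log hq.le, ← hL] at hl
  set m : ℤ := n - n' with hm
  have hLne : ((L:ℝ):ℂ) ≠ 0 := Complex.ofReal_ne_zero.2 hlq0
  have hxy : x - y = ((-(m:ℝ)/2 : ℝ):ℂ) + ((Real.pi*(l:ℝ)/L : ℝ):ℂ) * Complex.I := by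
    push_cast
    push_cast at hl
    field_simp
    linear_combination hl
  have hre0 : (x - y).re = -(m:ℝ)/2 := by rw [hxy]; simp
  have him0 : (x - y).im = Real.pi*(l:ℝ)/L := by rw [hxy]; simp
  have habs : ‖x - y‖ < min (1/2) (Real.pi / (2 * |L|)) := by
    rwa [Complex.dist_eq] at hdist
  have habs_re : |(x - y).re| < 1/2 :=
    lt_of_le_of_lt (Complex.abs_re_le_norm _) (lt_of_lt_of_le habs (min_le_left _ _))
  have habs_im : |(x - y).im| < Real.pi / (2*|L|) :=
    lt_of_le_of_lt (Complex.abs_im_le_norm _) (lt_of_lt_of_le habs (min_le_right _ _))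
  have hLabs : (0:ℝ) < |L| := abs_pos.2 hlq0
  have hpi : (0:ℝ) < Real.pi := Real.pi_pos
  have hmz : m = 0 := by
    have h1 : |(m:ℝ)| < 1 := by
      rw [hre0] at habs_re
      rw [abs_div] at habs_re
      simp only [abs_neg] at habs_re
      rw [abs_of_pos (by norm_num : (0:ℝ) < 2)] at habs_re
      linarith
    have h2 : |m| < 1 := by exact_mod_cast h1
    exact Int.abs_lt_one_iff.mp h2
  have hlz : l = 0 := by
    have h1 : |Real.pi*(l:ℝ)/L| = Real.pi * |(l:ℝ)| / |L| := by
      rw [abs_div, abs_mul, abs_of_pos hpi]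
    have h2 : Real.pi * |(l:ℝ)| / |L| < Real.pi / (2*|L|) := by
      rw [← h1, ← him0]; exact habs_im
    have h3 : |(l:ℝ)| < 1/2 := by
      rw [div_lt_div_iff₀ hLabs (by positivity)] at h2
      nlinarith [mul_pos hpi hLabs]
    have h4 : |l| < 1 := by
      have : |(l:ℝ)| < 1 := by linarith
      exact_mod_cast this
    exact Int.abs_lt_one_iff.mp h4
  have hsub : x - y = 0 := by
    rw [hxy, hmz, hlz]
    simp
  have := sub_eq_zero.mp hsub
  exact this

lemma eq_one_congr {a b : ℂ} (h : (q:ℂ)^a = 1) (hab : a = b) : (q:ℂ)^b = 1 := hab ▸ h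

lemma eventually_not_bad (hq : 0 < q) (hq1 : q < 1) (c : ℂ) (x₀ : ℂ) :
    ∀ᶠ x in nhdsWithin x₀ {x₀}ᶜ, ¬ ∃ n : ℤ, (q:ℂ) ^ (c + 2*x + (n:ℂ)) = 1 := by
  set δ := min (1/2 : ℝ) (Real.pi / (2 * |Real.log q|)) with hδ
  have hδ0 : 0 < δ := by
    apply lt_min (by norm_num)
    have h1 : 0 < |Real.log q| := abs_pos.2 (ne_of_lt (Real.log_neg hq hq1))
    have := Real.pi_pos
    positivity
  have hballmem : ∀ r : ℝ, 0 < r → ∀ᶠ x in nhdsWithin x₀ {x₀}ᶜ, x ∈ Metric.ball x₀ r :=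
    fun r hr => Filter.eventually_of_mem
      (mem_nhdsWithin_of_mem_nhds (Metric.ball_mem_nhds _ hr)) (fun x hx => hx)
  have hne : ∀ᶠ x in nhdsWithin x₀ {x₀}ᶜ, x ≠ x₀ := by
    filter_upwards [self_mem_nhdsWithin] with x hx
    simpa using hx
  by_cases hp : ∃ p ∈ Metric.ball x₀ (δ/2), ∃ n : ℤ, (q:ℂ) ^ (c + 2*p + (n:ℂ)) = 1
  · obtain ⟨p, hpball, hpbad⟩ := hp
    by_cases hpx : p = x₀
    · subst hpx
      filter_upwards [hballmem (δ/2) (by positivity), hne] with x hx hxne hbad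
      apply hxne
      apply bad_separated hq hq1 c hbad hpbad
      calc dist x p ≤ dist x p + dist p p := by simp
        _ < δ := by
            rw [Metric.mem_ball] at hx
            simp only [dist_self, add_zero]
            calc dist x p < δ/2 := hx
              _ < δ := by linarith
    · have hdp : 0 < dist p x₀ := dist_pos.2 hpx
      filter_upwards [hballmem (min (δ/2) (dist p x₀)) (lt_min (by positivity) hdp)]
        with x hx hbad
      rw [Metric.mem_ball] at hx
      have hxp : x = p := by
        apply bad_separated hq hq1 c hbad hpbad
        rw [Metric.mem_ball] at hpball
        calc dist x p ≤ dist x x₀ + dist x₀ p := dist_triangle _ _ _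
          _ < min (δ/2) (dist p x₀) + δ/2 := by
              rw [dist_comm x₀ p]; exact add_lt_add_of_lt_of_le hx hpball.le
          _ ≤ δ/2 + δ/2 := by
              have := min_le_left (δ/2) (dist p x₀); linarith
          _ = δ := by ring
      rw [hxp] at hx
      have := lt_of_lt_of_le hx (min_le_right _ _)
      exact absurd this (lt_irrefl _)
  · filter_upwards [hballmem (δ/2) (by positivity)] with x hx hbad
    exact hp ⟨x, hx, hbad⟩

lemma eventually_good (hq : 0 < q) (hq1 : q < 1) (x₀ : ℂ) :
    ∀ᶠ x in nhdsWithin x₀ {x₀}ᶜ, GoodP q k x := by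
  filter_upwards [eventually_not_bad hq hq1 0 x₀, eventually_not_bad hq hq1 k x₀,
    eventually_not_bad hq hq1 (-k) x₀] with x h0 hk2 hmk
  refine ⟨fun n => ?_, fun n => ?_, fun n => ?_⟩
  · exact fun h => h0 ⟨n, eq_one_congr h (by ring)⟩
  · exact fun h => hk2 ⟨n, eq_one_congr h (by ring)⟩
  · intro h
    have h' : (q:ℂ) ^ (-(k - 2*x + (n:ℂ))) = 1 := by
      rw [Complex.cpow_neg, h, inv_one]
    exact hmk ⟨-n, eq_one_congr h' (by push_cast; ring)⟩

lemma tendsto_punctured {f : ℂ → ℂ} (hf : Continuous f) (hinj : Function.Injective f)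
    (x₀ : ℂ) : Filter.Tendsto f (nhdsWithin x₀ {x₀}ᶜ) (nhdsWithin (f x₀) {f x₀}ᶜ) := by
  rw [tendsto_nhdsWithin_iff]
  constructor
  · exact (hf.tendsto x₀).mono_left nhdsWithin_le_nhds
  · filter_upwards [self_mem_nhdsWithin] with x hx
    simp only [Set.mem_compl_iff, Set.mem_singleton_iff] at hx ⊢
    exact fun h => hx (hinj h)

lemma continuous_qcpow (hq : 0 < q) {f : ℂ → ℂ} (hf : Continuous f) :
    Continuous fun x => (q:ℂ) ^ (f x) := by
  have h : (fun x => (q:ℂ) ^ (f x)) = fun x => Complex.exp (Complex.log (q:ℂ) * f x) :=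
    funext fun x => Complex.cpow_def_of_ne_zero (Qne0 hq) _
  rw [h]
  exact Complex.continuous_exp.comp (continuous_const.mul hf)

lemma factor_identity (t u w : ℂ) (hu : u ≠ 0) (ht : t ≠ 0) (htu : t*u ≠ 1) :
    (1 - u) * (1 - w) = ((1 - t*u) * (1 - u⁻¹)) * (t⁻¹ * ((1 - w) / (1 - (t*u)⁻¹))) := by
  have hd : (1:ℂ) - (t*u)⁻¹ ≠ 0 := by
    refine sub_ne_zero.2 (Ne.symm ?_); rw [Ne, inv_eq_one]; exact htu
  have hd2 : (1:ℂ) - t * u ≠ 0 := sub_ne_zero.2 (Ne.symm htu)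
  have h1 : (1:ℂ) - (t*u)⁻¹ = -(t*u)⁻¹ * (1 - t*u) := by
    field_simp
    ring
  have h2 : (1:ℂ) - u⁻¹ = -u⁻¹ * (1 - u) := by
    field_simp
    ring
  apply mul_right_cancel₀ hd
  rw [mul_assoc ((1 - t*u) * (1 - u⁻¹)) _ _, mul_assoc (t⁻¹) _ _,
    div_mul_cancel₀ _ hd, h1, h2, mul_inv]
  field_simp

lemma part2_gen (hq : 0 < q) (hq1 : q < 1) (B : ℂ)
    (hB : Filter.Tendsto (fun x : ℂ => (1 - (q:ℂ) ^ (2*x + k)) * muC q k x)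
      (nhdsWithin (-k/2) {(-k/2)}ᶜ) (nhds B)) (n : ℕ) :
    Filter.Tendsto (fun x : ℂ => (1 - (q:ℂ) ^ (k + (n:ℂ) + 2*x)) * muC q k x)
      (nhdsWithin (-(k + (n:ℂ))/2) {(-(k + (n:ℂ))/2)}ᶜ)
      (nhds ((((q:ℂ)^k)^(-(n:ℤ)) *
        ∏ i ∈ Finset.range n,
          (1 - ((q:ℂ)^k)^2 * (q:ℂ)^((i:ℂ)+1)) / (1 - (q:ℂ)^((i:ℂ)+1))) * B)) := by
  have hQ0 := Qne0 hq
  set x₂ : ℂ := -(k + (n:ℂ))/2 with hx₂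
  -- the shift map
  have hmap : Filter.Tendsto (fun x : ℂ => x + (n:ℂ)/2)
      (nhdsWithin x₂ {x₂}ᶜ) (nhdsWithin (-k/2) {(-k/2)}ᶜ) := by
    have h := tendsto_punctured (f := fun x : ℂ => x + (n:ℂ)/2) (by continuity)
      (fun a b hab => by simpa using hab) x₂
    rwa [show x₂ + (n:ℂ)/2 = -k/2 by rw [hx₂]; ring] at h
  have T1 : Filter.Tendsto
      (fun x : ℂ => (1 - (q:ℂ) ^ (2*(x + (n:ℂ)/2) + k)) * muC q k (x + (n:ℂ)/2))
      (nhdsWithin x₂ {x₂}ᶜ) (nhds B) := hB.comp hmap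
  -- the correction factor and its limit
  have T2 : Filter.Tendsto
      (fun x : ℂ => ∏ m ∈ Finset.range n,
        (((q:ℂ)^k)⁻¹ * ((1 - (q:ℂ)^(k - 2*x - (m:ℂ))) / (1 - (q:ℂ)^(-(k + 2*x + (m:ℂ)))))))
      (nhdsWithin x₂ {x₂}ᶜ)
      (nhds (∏ m ∈ Finset.range n,
        (((q:ℂ)^k)⁻¹ * ((1 - (q:ℂ)^(2*k + (((n-1-m:ℕ):ℂ)+1))) / (1 - (q:ℂ)^(((n-1-m:ℕ):ℂ)+1)))))) := by
    apply tendsto_finset_prod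
    intro m hm
    have hmn : m < n := Finset.mem_range.mp hm
    have hc : ((n-1-m:ℕ):ℂ) = (n:ℂ) - 1 - (m:ℂ) := by
      have h1 : m ≤ n-1 := by omega
      have h2 : 1 ≤ n := by omega
      push_cast [Nat.cast_sub h1, Nat.cast_sub h2]
      ring
    have hnum : Filter.Tendsto (fun x : ℂ => 1 - (q:ℂ)^(k - 2*x - (m:ℂ)))
        (nhdsWithin x₂ {x₂}ᶜ) (nhds (1 - (q:ℂ)^(2*k + (((n-1-m:ℕ):ℂ)+1)))) := by
      have c1 : Continuous (fun x : ℂ => 1 - (q:ℂ)^(k - 2*x - (m:ℂ))) :=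
        continuous_const.sub (continuous_qcpow hq (by continuity))
      have t1 := (c1.tendsto x₂).mono_left (nhdsWithin_le_nhds : nhdsWithin x₂ {x₂}ᶜ ≤ nhds x₂)
      rwa [show k - 2*x₂ - (m:ℂ) = 2*k + (((n-1-m:ℕ):ℂ)+1) by rw [hx₂, hc]; ring] at t1
    have hden : Filter.Tendsto (fun x : ℂ => 1 - (q:ℂ)^(-(k + 2*x + (m:ℂ))))
        (nhdsWithin x₂ {x₂}ᶜ) (nhds (1 - (q:ℂ)^(((n-1-m:ℕ):ℂ)+1))) := by
      have c1 : Continuous (fun x : ℂ => 1 - (q:ℂ)^(-(k + 2*x + (m:ℂ)))) :=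
        continuous_const.sub (continuous_qcpow hq (by continuity))
      have t1 := (c1.tendsto x₂).mono_left (nhdsWithin_le_nhds : nhdsWithin x₂ {x₂}ᶜ ≤ nhds x₂)
      rwa [show -(k + 2*x₂ + (m:ℂ)) = ((n-1-m:ℕ):ℂ)+1 by rw [hx₂, hc]; ring] at t1
    have hden_ne : (1:ℂ) - (q:ℂ)^(((n-1-m:ℕ):ℂ)+1) ≠ 0 := by
      refine sub_ne_zero.2 (Ne.symm (qcpow_ne_one_of_re hq hq1 ?_))
      simp only [Complex.add_re, Complex.natCast_re, Complex.one_re]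
      positivity
    exact tendsto_const_nhds.mul (hnum.div hden hden_ne)
  -- eventual equality
  have EV : ∀ᶠ x in nhdsWithin x₂ {x₂}ᶜ,
      (fun x : ℂ => (1 - (q:ℂ) ^ (2*(x + (n:ℂ)/2) + k)) * muC q k (x + (n:ℂ)/2)) x *
      (fun x : ℂ => ∏ m ∈ Finset.range n,
        (((q:ℂ)^k)⁻¹ * ((1 - (q:ℂ)^(k - 2*x - (m:ℂ))) / (1 - (q:ℂ)^(-(k + 2*x + (m:ℂ))))))) x =
      (1 - (q:ℂ) ^ (k + (n:ℂ) + 2*x)) * muC q k x := by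
    filter_upwards [eventually_good hq hq1 x₂] with x hg
    obtain ⟨hA, hB2, hC⟩ := hg
    have iter := muC_shift_iter hq hq1 ⟨hA, hB2, hC⟩ n
    have hPb_ne : (∏ m ∈ Finset.range n,
        ((1 - (q:ℂ)^(k + 2*x + (m:ℂ))) * (1 - (q:ℂ)^(-(2*x) - (m:ℂ))))) ≠ 0 := by
      rw [Finset.prod_ne_zero_iff]
      intro m _
      refine mul_ne_zero (sub_ne_zero.2 (Ne.symm (ne_one_congr (hB2 m) (by push_cast; ring))))
        (sub_ne_zero.2 (Ne.symm (ne_one_congr (qcpow_neg_ne_one hq (hA m)) (by push_cast; ring))))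
    have hPaPb : (∏ m ∈ Finset.range n,
          ((1 - (q:ℂ)^(2*x + (m:ℂ))) * (1 - (q:ℂ)^(k - 2*x - (m:ℂ))))) =
        (∏ m ∈ Finset.range n,
          ((1 - (q:ℂ)^(k + 2*x + (m:ℂ))) * (1 - (q:ℂ)^(-(2*x) - (m:ℂ))))) *
        (∏ m ∈ Finset.range n,
          (((q:ℂ)^k)⁻¹ * ((1 - (q:ℂ)^(k - 2*x - (m:ℂ))) / (1 - (q:ℂ)^(-(k + 2*x + (m:ℂ))))))) := by
      rw [← Finset.prod_mul_distrib]
      apply Finset.prod_congr rfl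
      intro m _
      have hu0 : (q:ℂ)^(2*x + (m:ℂ)) ≠ 0 := qcpow_ne_zero hq _
      have ht0 : (q:ℂ)^k ≠ 0 := qcpow_ne_zero hq _
      have hv1 : (q:ℂ)^(k + (2*x + (m:ℂ))) ≠ 1 := ne_one_congr (hB2 m) (by push_cast; ring)
      rw [show -(2*x) - (m:ℂ) = -(2*x + (m:ℂ)) by ring, Complex.cpow_neg,
          show k + 2*x + (m:ℂ) = k + (2*x + (m:ℂ)) by ring, Complex.cpow_neg,
          Complex.cpow_add k (2*x + (m:ℂ)) hQ0]
      rw [Complex.cpow_add k (2*x + (m:ℂ)) hQ0] at hv1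
      exact factor_identity _ _ _ hu0 ht0 hv1
    apply mul_right_cancel₀ hPb_ne
    rw [show 2*(x + (n:ℂ)/2) + k = k + (n:ℂ) + 2*x by push_cast; ring]
    linear_combination (1 - (q:ℂ)^(k + (n:ℂ) + 2*x)) * iter -
      (1 - (q:ℂ)^(k + (n:ℂ) + 2*x)) * muC q k (x + (n:ℂ)/2) * hPaPb
  have Tfin := (T1.mul T2).congr' EV
  rwa [show B * (∏ m ∈ Finset.range n,
      (((q:ℂ)^k)⁻¹ * ((1 - (q:ℂ)^(2*k + (((n-1-m:ℕ):ℂ)+1))) / (1 - (q:ℂ)^(((n-1-m:ℕ):ℂ)+1))))) =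
    (((q:ℂ)^k)^(-(n:ℤ)) *
        ∏ i ∈ Finset.range n,
          (1 - ((q:ℂ)^k)^2 * (q:ℂ)^((i:ℂ)+1)) / (1 - (q:ℂ)^((i:ℂ)+1))) * B by
      rw [Finset.prod_range_reflect
        (f := fun i : ℕ => ((q:ℂ)^k)⁻¹ * ((1 - (q:ℂ)^(2*k + ((i:ℂ)+1))) / (1 - (q:ℂ)^((i:ℂ)+1))))]
      rw [Finset.prod_mul_distrib, Finset.prod_const, Finset.card_range]
      rw [inv_pow, ← zpow_natCast ((q:ℂ)^k), ← zpow_neg]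
      have hfac : ∀ i ∈ Finset.range n,
          (1 - (q:ℂ)^(2*k + ((i:ℂ)+1))) / (1 - (q:ℂ)^((i:ℂ)+1)) =
          (1 - ((q:ℂ)^k)^2 * (q:ℂ)^((i:ℂ)+1)) / (1 - (q:ℂ)^((i:ℂ)+1)) := by
        intro i _
        rw [Complex.cpow_add (2*k) ((i:ℂ)+1) hQ0, show (2:ℂ)*k = k + k by ring,
          Complex.cpow_add k k hQ0, sq]
      rw [Finset.prod_congr rfl hfac]
      ring] at Tfin

end MuAux

/-- The ratios of regularized values of `μ^•` at the double affine residual points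
`±(k+j)/2` and `-k/2`:  `μ^•((k+j)/2)/μ^•(-k/2) = t^{-(j-1)} ∏_{i=1}^{j-1}(1-t²qⁱ)/(1-qⁱ)`
and `μ^•(-(k+j)/2)/μ^•(-k/2) = t^{-j} ∏_{i=1}^{j}(1-t²qⁱ)/(1-qⁱ)`, where `t = q^k` and
the value of `μ^•` at a (simple) pole `y` of `μ` is the limit of `μ` multiplied by the
vanishing denominator factor. -/
theorem mu_bullet_ratios (q : ℝ) (k : ℂ) (j : ℕ) (hq : 0 < q) (hq1 : q < 1)
    (hj : 1 ≤ j) (hk : k.re < 0)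
    (h1 : ∀ n : ℤ, (q : ℂ) ^ (2 * k + (n : ℂ)) ≠ 1)
    (h2 : ∀ n : ℤ, (q : ℂ) ^ (k + (n : ℂ)) ≠ 1)
    (B : ℂ)
    (hB : Tendsto (fun x : ℂ => (1 - (q : ℂ) ^ (2 * x + k)) * muC q k x)
      (nhdsWithin (-k/2) {(-k/2)}ᶜ) (nhds B)) :
    Tendsto (fun x : ℂ => (1 - (q : ℂ) ^ (k + (j : ℂ) - 2 * x)) * muC q k x)
      (nhdsWithin ((k + (j : ℂ))/2) {((k + (j : ℂ))/2)}ᶜ)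
      (nhds ((((q : ℂ) ^ k) ^ (-((j : ℤ) - 1)) *
        ∏ i ∈ Finset.range (j - 1),
          (1 - ((q : ℂ) ^ k) ^ 2 * (q : ℂ) ^ ((i : ℂ) + 1)) / (1 - (q : ℂ) ^ ((i : ℂ) + 1))) * B))
    ∧
    Tendsto (fun x : ℂ => (1 - (q : ℂ) ^ (k + (j : ℂ) + 2 * x)) * muC q k x)
      (nhdsWithin (-(k + (j : ℂ))/2) {(-(k + (j : ℂ))/2)}ᶜ)
      (nhds ((((q : ℂ) ^ k) ^ (-(j : ℤ)) *
        ∏ i ∈ Finset.range j,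
          (1 - ((q : ℂ) ^ k) ^ 2 * (q : ℂ) ^ ((i : ℂ) + 1)) / (1 - (q : ℂ) ^ ((i : ℂ) + 1))) * B)) := by
  constructor
  · set n := j - 1 with hn
    have hjc : (j:ℂ) = (n:ℂ) + 1 := by
      have h' : n + 1 = j := by omega
      rw [← h']
      push_cast
      ring
    have key := MuAux.part2_gen (k := k) hq hq1 B hB n
    have hmap : Tendsto (fun x : ℂ => 1/2 - x)
        (nhdsWithin ((k + (j:ℂ))/2) {((k + (j:ℂ))/2)}ᶜ)
        (nhdsWithin (-(k + (n:ℂ))/2) {(-(k + (n:ℂ))/2)}ᶜ) := by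
      have h := MuAux.tendsto_punctured (f := fun x : ℂ => 1/2 - x) (by continuity)
        (fun a b hab => by
          have h' : (1:ℂ)/2 - a = 1/2 - b := hab
          have := congrArg (fun z : ℂ => 1/2 - z) h'
          simpa using h') ((k + (j:ℂ))/2)
      rwa [show ((1:ℂ)/2 - (k + (j:ℂ))/2 : ℂ) = -(k + (n:ℂ))/2 by rw [hjc]; ring] at h
    have comp := key.comp hmap
    rw [show -((j:ℤ) - 1) = -(n:ℤ) by omega]
    apply comp.congr
    intro x
    show (1 - (q:ℂ) ^ (k + (n:ℂ) + 2*(1/2 - x))) * muC q k (1/2 - x) =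
      (1 - (q:ℂ) ^ (k + (j:ℂ) - 2 * x)) * muC q k x
    rw [MuAux.muC_reflect, show k + (n:ℂ) + 2*(1/2 - x) = k + (j:ℂ) - 2*x by rw [hjc]; ring]
  · exact MuAux.part2_gen (k := k) hq hq1 B hB j
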